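/- arXiv:1910.14674 — 2 statements merged into one kernel-verified Lean document; each statement's English description precedes it below -/
import Mathlib

section
/- The sum of the reciprocals of all twin primes converges; i.e., the series ∑_{p : p and p+2 both prime} (1/p + 1/(p+2)) converges, assuming the sieve bound π_2(x) ≤ C·x/(log x)² for all x ≥ 3. -/
private noncomputable def brunF : ℕ → ℝ := fun p =>
  if p.Prime ∧ (p + 2).Prime then (1 : ℝ) / p + 1 / (p + 2) else 0

private lemma brunF_nonneg (p : ℕ) : 0 ≤ brunF p := by
  unfold brunF; split <;> positivity

private lemma sum_sq_bound (K : ℕ) :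
    ∑ k ∈ Finset.range K, (1 : ℝ) / ((k : ℝ) + 1) ^ 2 ≤ 2 := by
  have key : ∀ K : ℕ, ∑ k ∈ Finset.range K, (1 : ℝ) / ((k : ℝ) + 1) ^ 2
      ≤ 2 - 2 / ((K : ℝ) + 1) := by
    intro K
    induction K with
    | zero => norm_num
    | succ K ih =>
      rw [Finset.sum_range_succ]
      have hK : (0:ℝ) < (K:ℝ) + 1 := by positivity
      have hK2 : (0:ℝ) < (K:ℝ) + 2 := by positivity
      have h : (1:ℝ) / ((K:ℝ) + 1) ^ 2 ≤ 2 / ((K:ℝ)+1) - 2/((K:ℝ)+2) := by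
        rw [div_sub_div _ _ (ne_of_gt hK) (ne_of_gt hK2),
          div_le_div_iff₀ (by positivity) (by positivity)]
        nlinarith
      push_cast
      have he : ((K:ℝ)+1+1) = (K:ℝ)+2 := by ring
      rw [he]
      linarith
  have h2 : (0:ℝ) < 2 / ((K:ℝ)+1) := by positivity
  linarith [key K]

private lemma block_bound (C : ℝ) (hC : 0 < C)
    (hbound : ∀ x : ℝ, 3 ≤ x →
      (((Finset.Iic ⌊x⌋₊).filter (fun p : ℕ => p.Prime ∧ (p + 2).Prime)).card : ℝ)
        ≤ C * x / (Real.log x) ^ 2)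
    (k : ℕ) (hk : 1 ≤ k) :
    ∑ p ∈ Finset.Ico (2 ^ k) (2 ^ (k + 1)), brunF p
      ≤ (4 * C / (Real.log 2) ^ 2) * (1 / ((k : ℝ) + 1) ^ 2) := by
  have hlog2 : (0:ℝ) < Real.log 2 := Real.log_pos (by norm_num)
  have hx3 : (3:ℝ) ≤ ((2 ^ (k+1) : ℕ) : ℝ) := by
    have h4 : (4:ℕ) ≤ 2 ^ (k+1) := by
      calc (4:ℕ) = 2 ^ 2 := by norm_num
      _ ≤ 2 ^ (k+1) := Nat.pow_le_pow_right (by norm_num) (by omega)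
    exact le_trans (by norm_num) (Nat.cast_le.mpr h4 : (4:ℝ) ≤ _)
  have hcard := hbound ((2 ^ (k+1) : ℕ) : ℝ) hx3
  rw [Nat.floor_natCast] at hcard
  have hlogx : Real.log ((2 ^ (k+1) : ℕ) : ℝ) = ((k:ℝ)+1) * Real.log 2 := by
    push_cast
    rw [Real.log_pow]; push_cast; ring
  rw [hlogx] at hcard
  -- rewrite block sum as sum over filtered set
  have hsum : ∑ p ∈ Finset.Ico (2 ^ k) (2 ^ (k + 1)), brunF p
      = ∑ p ∈ (Finset.Ico (2 ^ k) (2 ^ (k+1))).filter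
        (fun p : ℕ => p.Prime ∧ (p + 2).Prime), ((1:ℝ)/p + 1/(p+2)) := by
    rw [Finset.sum_filter]; rfl
  rw [hsum]
  have hterm : ∀ p ∈ (Finset.Ico (2 ^ k) (2 ^ (k+1))).filter
      (fun p : ℕ => p.Prime ∧ (p + 2).Prime), (1:ℝ)/p + 1/(p+2) ≤ 2 / (2:ℝ)^k := by
    intro p hp
    simp only [Finset.mem_filter, Finset.mem_Ico] at hp
    have hp1 : (2:ℝ)^k ≤ (p:ℝ) := by exact_mod_cast hp.1.1
    have hpk : (0:ℝ) < (2:ℝ)^k := by positivity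
    have h1 : (1:ℝ)/p ≤ 1/(2:ℝ)^k := one_div_le_one_div_of_le hpk hp1
    have h2 : (1:ℝ)/((p:ℝ)+2) ≤ 1/(2:ℝ)^k := by
      apply one_div_le_one_div_of_le hpk; linarith
    calc (1:ℝ)/p + 1/((p:ℝ)+2) ≤ 1/(2:ℝ)^k + 1/(2:ℝ)^k := by push_cast; linarith
    _ = 2/(2:ℝ)^k := by ring
  have hsub : (Finset.Ico (2 ^ k) (2 ^ (k+1))).filter
      (fun p : ℕ => p.Prime ∧ (p + 2).Prime) ⊆
      (Finset.Iic (2 ^ (k+1))).filter (fun p : ℕ => p.Prime ∧ (p + 2).Prime) := by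
    intro p hp
    simp only [Finset.mem_filter, Finset.mem_Ico, Finset.mem_Iic] at hp ⊢
    exact ⟨le_of_lt hp.1.2, hp.2⟩
  have hcard2 : (((Finset.Ico (2 ^ k) (2 ^ (k+1))).filter
      (fun p : ℕ => p.Prime ∧ (p + 2).Prime)).card : ℝ)
      ≤ C * ((2 ^ (k+1) : ℕ) : ℝ) / (((k:ℝ)+1) * Real.log 2) ^ 2 := by
    refine le_trans ?_ hcard
    exact_mod_cast Finset.card_le_card hsub
  have hsle := Finset.sum_le_card_nsmul _ _ _ hterm
  rw [nsmul_eq_mul] at hsle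
  refine le_trans hsle ?_
  have hpk : (0:ℝ) < (2:ℝ)^k := by positivity
  have h2k : ((2 ^ (k+1) : ℕ) : ℝ) = 2 * (2:ℝ)^k := by push_cast [pow_succ]; ring
  have htpos : (0:ℝ) ≤ 2 / (2:ℝ)^k := by positivity
  calc (((Finset.Ico (2 ^ k) (2 ^ (k+1))).filter
      (fun p : ℕ => p.Prime ∧ (p + 2).Prime)).card : ℝ) * (2 / (2:ℝ)^k)
      ≤ (C * ((2 ^ (k+1) : ℕ) : ℝ) / (((k:ℝ)+1) * Real.log 2) ^ 2) * (2 / (2:ℝ)^k) :=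
        mul_le_mul_of_nonneg_right hcard2 htpos
    _ = (4 * C / (Real.log 2) ^ 2) * (1 / ((k : ℝ) + 1) ^ 2) := by
        rw [h2k]; field_simp; ring

theorem brun_conditional
    (C : ℝ) (hC : 0 < C)
    (hbound : ∀ x : ℝ, 3 ≤ x →
      (((Finset.Iic ⌊x⌋₊).filter (fun p : ℕ => p.Prime ∧ (p + 2).Prime)).card : ℝ)
        ≤ C * x / (Real.log x) ^ 2) :
    Summable (fun p : ℕ =>
      if p.Prime ∧ (p + 2).Prime then (1 : ℝ) / p + 1 / (p + 2) else 0) := by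
  have hlog2 : (0:ℝ) < Real.log 2 := Real.log_pos (by norm_num)
  set D : ℝ := 4 * C / (Real.log 2) ^ 2 with hD
  have hDpos : 0 < D := by positivity
  -- key induction over dyadic ranges
  have main : ∀ K : ℕ, ∑ p ∈ Finset.range (2 ^ K), brunF p
      ≤ D * ∑ k ∈ Finset.range K, (1:ℝ) / ((k:ℝ)+1) ^ 2 := by
    intro K
    induction K with
    | zero =>
      simp [brunF, Nat.not_prime_zero]
    | succ K ih =>
      have hsplit : ∑ p ∈ Finset.range (2 ^ K), brunF p
          + ∑ p ∈ Finset.Ico (2 ^ K) (2 ^ (K+1)), brunF p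
          = ∑ p ∈ Finset.range (2 ^ (K+1)), brunF p := by
        rw [Finset.range_eq_Ico, Finset.range_eq_Ico]
        exact Finset.sum_Ico_consecutive brunF (Nat.zero_le _)
          (Nat.pow_le_pow_right (by norm_num) (by omega) : 2 ^ K ≤ 2 ^ (K+1))
      have hblock : ∑ p ∈ Finset.Ico (2 ^ K) (2 ^ (K+1)), brunF p
          ≤ D * ((1:ℝ) / ((K:ℝ)+1) ^ 2) := by
        rcases Nat.eq_zero_or_pos K with hK0 | hKpos
        · subst hK0
          have he : Finset.Ico (2 ^ 0) (2 ^ 1) = {1} := rfl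
          rw [he, Finset.sum_singleton]
          have h1 : brunF 1 = 0 := by simp [brunF, Nat.not_prime_one]
          rw [h1]
          positivity
        · exact block_bound C hC hbound K hKpos
      rw [Finset.sum_range_succ, ← hsplit, mul_add]
      exact add_le_add ih hblock
  apply summable_of_sum_range_le (c := D * 2) brunF_nonneg
  intro n
  have hsub : Finset.range n ⊆ Finset.range (2 ^ n) :=
    Finset.range_subset_range.mpr (le_of_lt (Nat.lt_two_pow_self (n := n)))
  calc ∑ i ∈ Finset.range n, brunF i
      ≤ ∑ i ∈ Finset.range (2 ^ n), brunF i :=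
        Finset.sum_le_sum_of_subset_of_nonneg hsub (fun i _ _ => brunF_nonneg i)
    _ ≤ D * ∑ k ∈ Finset.range n, (1:ℝ) / ((k:ℝ)+1) ^ 2 := main n
    _ ≤ D * 2 := by
        exact mul_le_mul_of_nonneg_left (sum_sq_bound n) (le_of_lt hDpos)
end

section
/- Mean value theorem for Dirichlet polynomials: for any complex sequence (a_n) with |a_n| ≤ 1 and any T, N ≥ 1, ∫_T^{2T} |∑_{n ≤ N} a_n n^{−it}|² dt ≪ T·N + N², i.e., there is an absolute constant K such that the integral is at most K(TN + N²). -/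
open intervalIntegral MeasureTheory

private lemma mvt_integral_linear_mul_exp (p q μ : ℂ) (hμ : μ ≠ 0) (a b : ℝ) :
    ∫ t in a..b, (p + q * t) * Complex.exp (μ * t) =
      (((p + q * b) * μ - q) * Complex.exp (μ * b)
        - ((p + q * a) * μ - q) * Complex.exp (μ * a)) / μ ^ 2 := by
  have key : ∀ x : ℝ, HasDerivAt (fun t : ℝ => ((p + q * t) / μ - q / μ ^ 2) * Complex.exp (μ * t))
      ((p + q * x) * Complex.exp (μ * x)) x := by
    intro x
    have h1 : HasDerivAt (fun t : ℝ => (t : ℂ)) 1 x := by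
      simpa using (hasDerivAt_id x).ofReal_comp
    have h2 : HasDerivAt (fun t : ℝ => μ * (t : ℂ)) μ x := by
      simpa using h1.const_mul μ
    have h3 : HasDerivAt (fun t : ℝ => Complex.exp (μ * t)) (Complex.exp (μ * x) * μ) x := h2.cexp
    have h4 : HasDerivAt (fun t : ℝ => (p + q * (t : ℂ)) / μ - q / μ ^ 2) (q / μ) x := by
      simpa using (((h1.const_mul q).const_add p).div_const μ).sub_const (q / μ ^ 2)
    have := h4.mul h3
    refine this.congr_deriv ?_
    field_simp
    ring
  rw [intervalIntegral.integral_eq_sub_of_hasDerivAt (fun x _ => key x)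
    ((Continuous.intervalIntegrable (by continuity) _ _))]
  field_simp

private lemma mvt_triangle_fourier_bound (c L ξ : ℝ) (hL : 0 < L) (hξ : ξ ≠ 0) :
    ‖∫ t in (c - L)..(c + L), ((1 - |t - c| / L : ℝ) : ℂ) * Complex.exp (Complex.I * ξ * t)‖
      ≤ 4 / (L * ξ ^ 2) := by
  set μ : ℂ := Complex.I * ξ with hμdef
  have hμ : μ ≠ 0 := by
    simp [hμdef, Complex.I_ne_zero, Complex.ofReal_eq_zero, hξ]
  have hLc : (L : ℂ) ≠ 0 := by exact_mod_cast hL.ne'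
  have hint : ∀ ξ' : ℝ, Continuous fun t : ℝ =>
      ((1 - |t - c| / L : ℝ) : ℂ) * Complex.exp (Complex.I * ξ' * t) := by
    intro ξ'
    apply Continuous.mul
    · exact Complex.continuous_ofReal.comp (by continuity)
    · exact Complex.continuous_exp.comp (by continuity)
  have h1 : (∫ t in (c - L)..c, ((1 - |t - c| / L : ℝ) : ℂ) * Complex.exp (Complex.I * ξ * t))
      = ∫ t in (c - L)..c, ((↑(1 - c / L) : ℂ) + (↑(L⁻¹) : ℂ) * t) * Complex.exp (μ * t) := by
    apply intervalIntegral.integral_congr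
    intro t ht
    dsimp only
    rw [Set.uIcc_of_le (by linarith)] at ht
    have h : |t - c| = c - t := by
      rw [abs_of_nonpos (by linarith [ht.2])]; ring
    rw [h, hμdef]
    push_cast
    congr 1
    field_simp
    ring
  have h2 : (∫ t in c..(c + L), ((1 - |t - c| / L : ℝ) : ℂ) * Complex.exp (Complex.I * ξ * t))
      = ∫ t in c..(c + L), ((↑(1 + c / L) : ℂ) + (↑(-L⁻¹) : ℂ) * t) * Complex.exp (μ * t) := by
    apply intervalIntegral.integral_congr
    intro t ht
    dsimp only
    rw [Set.uIcc_of_le (by linarith)] at ht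
    have h : |t - c| = t - c := abs_of_nonneg (by linarith [ht.1])
    rw [h, hμdef]
    push_cast
    congr 1
    field_simp
    ring
  have hsplit : (∫ t in (c - L)..(c + L),
        ((1 - |t - c| / L : ℝ) : ℂ) * Complex.exp (Complex.I * ξ * t))
      = (∫ t in (c - L)..c, ((1 - |t - c| / L : ℝ) : ℂ) * Complex.exp (Complex.I * ξ * t))
        + ∫ t in c..(c + L), ((1 - |t - c| / L : ℝ) : ℂ) * Complex.exp (Complex.I * ξ * t) := by
    rw [intervalIntegral.integral_add_adjacent_intervals
      ((hint ξ).intervalIntegrable _ _) ((hint ξ).intervalIntegrable _ _)]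
  have hval : (∫ t in (c - L)..(c + L),
        ((1 - |t - c| / L : ℝ) : ℂ) * Complex.exp (Complex.I * ξ * t))
      = (Complex.exp (μ * ↑(c - L)) + Complex.exp (μ * ↑(c + L)) - 2 * Complex.exp (μ * (c : ℂ)))
          / ((L : ℂ) * μ ^ 2) := by
    have hμ2 : μ ^ 2 ≠ 0 := pow_ne_zero 2 hμ
    have hLμ2 : (L : ℂ) * μ ^ 2 ≠ 0 := mul_ne_zero hLc hμ2
    rw [hsplit, h1, h2, mvt_integral_linear_mul_exp _ _ _ hμ, mvt_integral_linear_mul_exp _ _ _ hμ,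
      ← add_div, div_eq_div_iff hμ2 hLμ2]
    have hc1 : ((1 - c / L : ℝ) : ℂ) = 1 - ↑c / ↑L := by push_cast; ring
    have hc2 : ((1 + c / L : ℝ) : ℂ) = 1 + ↑c / ↑L := by push_cast; ring
    have hc3 : ((L⁻¹ : ℝ) : ℂ) = (↑L)⁻¹ := by push_cast; ring
    have hc4 : ((-L⁻¹ : ℝ) : ℂ) = -(↑L)⁻¹ := by push_cast; ring
    rw [hc1, hc2, hc3, hc4]
    push_cast
    field_simp
    ring
  rw [hval]
  have hexp : ∀ z : ℂ, z.im = 0 → ‖Complex.exp (μ * z)‖ = 1 := by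
    intro z hz
    rw [Complex.norm_exp, hμdef]
    simp [Complex.mul_re, hz]
  have hden : ‖(L : ℂ) * μ ^ 2‖ = L * ξ ^ 2 := by
    rw [hμdef]
    simp [norm_mul, norm_pow, Complex.norm_real, abs_of_pos hL,
      _root_.sq_abs]
  rw [norm_div, hden]
  have hnum : ‖Complex.exp (μ * ((c - L : ℝ) : ℂ)) + Complex.exp (μ * ((c + L : ℝ) : ℂ))
      - 2 * Complex.exp (μ * (c : ℂ))‖ ≤ 4 := by
    calc ‖Complex.exp (μ * ((c - L : ℝ) : ℂ)) + Complex.exp (μ * ((c + L : ℝ) : ℂ))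
        - 2 * Complex.exp (μ * (c : ℂ))‖
        ≤ ‖Complex.exp (μ * ((c - L : ℝ) : ℂ)) + Complex.exp (μ * ((c + L : ℝ) : ℂ))‖
            + ‖2 * Complex.exp (μ * (c : ℂ))‖ := norm_sub_le _ _
      _ ≤ ‖Complex.exp (μ * ((c - L : ℝ) : ℂ))‖ + ‖Complex.exp (μ * ((c + L : ℝ) : ℂ))‖
            + ‖(2 : ℂ)‖ * ‖Complex.exp (μ * (c : ℂ))‖ := by
          rw [norm_mul]; exact add_le_add_left (norm_add_le _ _) _
      _ ≤ 4 := by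
          rw [hexp _ (by simp), hexp _ (by simp), hexp _ (by simp)]
          norm_num
  gcongr

private lemma mvt_norm_exp (xi x : ℝ) : ‖Complex.exp (Complex.I * (xi : ℂ) * (x : ℂ))‖ = 1 := by
  rw [Complex.norm_exp]
  simp [Complex.mul_re]

private lemma mvt_sum_inv_sq_le (N : ℕ) : ∑ d ∈ Finset.Icc 1 N, ((d : ℝ))⁻¹ ^ 2 ≤ 2 := by
  suffices h : ∀ M : ℕ, 1 ≤ M → ∑ d ∈ Finset.Icc 1 M, ((d : ℝ))⁻¹ ^ 2 ≤ 2 - (M : ℝ)⁻¹ by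
    rcases Nat.eq_zero_or_pos N with h0 | h1
    · simp [h0]
    · have := h N h1
      have : (0:ℝ) ≤ (N:ℝ)⁻¹ := by positivity
      linarith [h N h1]
  intro M hM
  induction M with
  | zero => omega
  | succ n ih =>
    rcases Nat.eq_zero_or_pos n with h0 | h1
    · subst h0; norm_num
    · rw [Finset.sum_Icc_succ_top (by omega : 1 ≤ n + 1)]
      have hn : (0:ℝ) < n := by exact_mod_cast h1
      have key : ((n:ℝ) + 1)⁻¹ ^ 2 ≤ (n:ℝ)⁻¹ - ((n:ℝ) + 1)⁻¹ := by
        have e : (n:ℝ)⁻¹ - ((n:ℝ) + 1)⁻¹ = 1 / ((n:ℝ) * ((n:ℝ) + 1)) := by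
          field_simp
          ring
        rw [e, pow_two, ← one_div, div_mul_div_comm,
          div_le_div_iff₀ (by positivity) (by positivity)]
        nlinarith
      have := ih h1
      push_cast
      push_cast at this
      linarith

private lemma mvt_row_sum_le (N m : ℕ) (hm : m ∈ Finset.Icc 1 N) :
    ∑ n ∈ (Finset.Icc 1 N).erase m, (((m:ℝ) - (n:ℝ))⁻¹) ^ 2 ≤ 4 := by
  simp only [Finset.mem_Icc] at hm
  classical
  have hsplit := Finset.sum_filter_add_sum_filter_not ((Finset.Icc 1 N).erase m)
    (fun n => n < m) (fun n => (((m:ℝ) - (n:ℝ))⁻¹) ^ 2)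
  have h1 : ∑ n ∈ ((Finset.Icc 1 N).erase m).filter (fun n => n < m),
      (((m:ℝ) - (n:ℝ))⁻¹) ^ 2 ≤ 2 := by
    have heq : ∀ n ∈ ((Finset.Icc 1 N).erase m).filter (fun n => n < m),
        (((m:ℝ) - (n:ℝ))⁻¹) ^ 2 = (((m - n : ℕ) : ℝ))⁻¹ ^ 2 := by
      intro n hn
      simp only [Finset.mem_filter] at hn
      rw [Nat.cast_sub hn.2.le]
    rw [Finset.sum_congr rfl heq]
    calc ∑ n ∈ ((Finset.Icc 1 N).erase m).filter (fun n => n < m), (((m - n : ℕ) : ℝ))⁻¹ ^ 2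
        = ∑ d ∈ (((Finset.Icc 1 N).erase m).filter (fun n => n < m)).image (fun n => m - n),
            ((d : ℝ))⁻¹ ^ 2 := by
          rw [Finset.sum_image]
          intro x hx y hy hxy
          simp only [Finset.mem_coe, Finset.mem_filter] at hx hy hxy
          omega
      _ ≤ ∑ d ∈ Finset.Icc 1 N, ((d : ℝ))⁻¹ ^ 2 := by
          apply Finset.sum_le_sum_of_subset_of_nonneg
          · intro d hd
            simp only [Finset.mem_image, Finset.mem_filter, Finset.mem_erase,
              Finset.mem_Icc] at hd ⊢
            obtain ⟨n, ⟨⟨hne, h1n, hnN⟩, hnm⟩, rfl⟩ := hd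
            omega
          · intros; positivity
      _ ≤ 2 := mvt_sum_inv_sq_le N
  have h2 : ∑ n ∈ ((Finset.Icc 1 N).erase m).filter (fun n => ¬ n < m),
      (((m:ℝ) - (n:ℝ))⁻¹) ^ 2 ≤ 2 := by
    have heq : ∀ n ∈ ((Finset.Icc 1 N).erase m).filter (fun n => ¬ n < m),
        (((m:ℝ) - (n:ℝ))⁻¹) ^ 2 = (((n - m : ℕ) : ℝ))⁻¹ ^ 2 := by
      intro n hn
      simp only [Finset.mem_filter, Finset.mem_erase, not_lt] at hn
      have hmn : m ≤ n := hn.2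
      rw [Nat.cast_sub hmn, inv_pow, inv_pow]
      congr 1
      ring
    rw [Finset.sum_congr rfl heq]
    calc ∑ n ∈ ((Finset.Icc 1 N).erase m).filter (fun n => ¬ n < m), (((n - m : ℕ) : ℝ))⁻¹ ^ 2
        = ∑ d ∈ (((Finset.Icc 1 N).erase m).filter (fun n => ¬ n < m)).image (fun n => n - m),
            ((d : ℝ))⁻¹ ^ 2 := by
          rw [Finset.sum_image]
          intro x hx y hy hxy
          simp only [Finset.mem_coe, Finset.mem_filter, Finset.mem_erase, not_lt] at hx hy hxy
          omega
      _ ≤ ∑ d ∈ Finset.Icc 1 N, ((d : ℝ))⁻¹ ^ 2 := by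
          apply Finset.sum_le_sum_of_subset_of_nonneg
          · intro d hd
            simp only [Finset.mem_image, Finset.mem_filter, Finset.mem_erase,
              Finset.mem_Icc, not_lt] at hd ⊢
            obtain ⟨n, ⟨⟨hne, h1n, hnN⟩, hnm⟩, rfl⟩ := hd
            omega
          · intros; positivity
      _ ≤ 2 := mvt_sum_inv_sq_le N
  linarith

private lemma mvt_log_gap (N m n : ℕ) (hm : m ∈ Finset.Icc 1 N) (hn : n ∈ Finset.Icc 1 N)
    (hmn : m ≠ n) :
    ((m:ℝ) - (n:ℝ)) ^ 2 / (N:ℝ) ^ 2 ≤ (Real.log n - Real.log m) ^ 2 := by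
  simp only [Finset.mem_Icc] at hm hn
  have hN : (0:ℝ) < N := by exact_mod_cast (by omega : 0 < N)
  have key : ∀ p q : ℕ, 1 ≤ p → q ≤ N → p < q →
      ((q:ℝ) - p) / N ≤ Real.log q - Real.log p := by
    intro p q hp hq hpq
    have hp0 : (0:ℝ) < p := by exact_mod_cast hp
    have hq0 : (0:ℝ) < q := by exact_mod_cast (by omega : 0 < q)
    have hlog := Real.log_le_sub_one_of_pos (show (0:ℝ) < (p:ℝ)/(q:ℝ) by positivity)
    rw [Real.log_div (by positivity) (by positivity)] at hlog
    have h1 : 1 - (p:ℝ)/q ≤ Real.log q - Real.log p := by linarith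
    have h2 : ((q:ℝ) - p)/N ≤ 1 - (p:ℝ)/q := by
      have hqN : (q:ℝ) ≤ N := by exact_mod_cast hq
      have hqp : (0:ℝ) ≤ (q:ℝ) - p := by
        have : (p:ℝ) ≤ q := by exact_mod_cast hpq.le
        linarith
      have e : 1 - (p:ℝ)/q = ((q:ℝ) - p)/q := by field_simp
      rw [e]
      gcongr
    linarith
  rcases lt_or_gt_of_ne hmn with h | h
  · have := key m n (by omega) (by omega) h
    have hnn : (0:ℝ) ≤ ((n:ℝ) - m)/N := by
      have : (m:ℝ) < n := by exact_mod_cast h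
      exact div_nonneg (by linarith) hN.le
    have hsq : (((n:ℝ) - m)/N)^2 ≤ (Real.log n - Real.log m)^2 := by
      apply sq_le_sq' <;> nlinarith
    calc ((m:ℝ) - n)^2/(N:ℝ)^2 = (((n:ℝ) - m)/N)^2 := by ring
      _ ≤ _ := hsq
  · have := key n m (by omega) (by omega) h
    have hnn : (0:ℝ) ≤ ((m:ℝ) - n)/N := by
      have : (n:ℝ) < m := by exact_mod_cast h
      exact div_nonneg (by linarith) hN.le
    have hsq : (((m:ℝ) - n)/N)^2 ≤ (Real.log m - Real.log n)^2 := by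
      apply sq_le_sq' <;> nlinarith
    calc ((m:ℝ) - n)^2/(N:ℝ)^2 = (((m:ℝ) - n)/N)^2 := by ring
      _ ≤ (Real.log m - Real.log n)^2 := hsq
      _ = (Real.log n - Real.log m)^2 := by ring

set_option maxHeartbeats 2000000 in
open Complex in
theorem mean_value_theorem_dirichlet_polynomials :
    ∃ K : ℝ, 0 < K ∧ ∀ (a : ℕ → ℂ) (T : ℝ) (N : ℕ), 1 ≤ T → 1 ≤ N →
      (∀ n, ‖a n‖ ≤ 1) →
      (∫ t in T..(2 * T),
          ‖∑ n ∈ Finset.Icc 1 N, a n * (n : ℂ) ^ (-(t : ℂ) * Complex.I)‖ ^ 2)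
        ≤ K * (T * N + (N : ℝ) ^ 2) := by
  classical
  refine ⟨100, by norm_num, ?_⟩
  intro a T N hT hN ha
  -- setup
  set M : ℝ := max T (N : ℝ) with hMdef
  set L : ℝ := 2 * M with hLdef
  set c : ℝ := 3 * T / 2 with hcdef
  have hNR : (1:ℝ) ≤ N := by exact_mod_cast hN
  have hMT : T ≤ M := le_max_left _ _
  have hMN : (N:ℝ) ≤ M := le_max_right _ _
  have hM1 : (1:ℝ) ≤ M := le_trans hT hMT
  have hM0 : (0:ℝ) < M := lt_of_lt_of_le one_pos hM1
  have hL0 : (0:ℝ) < L := by rw [hLdef]; linarith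
  have hcl : c - L ≤ T := by rw [hcdef, hLdef]; nlinarith
  have hcr : 2 * T ≤ c + L := by rw [hcdef, hLdef]; nlinarith
  have habL : c - L ≤ c + L := by linarith
  have hTT : T ≤ 2 * T := by linarith
  -- the Dirichlet polynomial
  set f : ℝ → ℂ := fun t => ∑ n ∈ Finset.Icc 1 N,
    a n * Complex.exp (Complex.I * ((-Real.log n : ℝ) : ℂ) * (t : ℂ)) with hfdef
  have hfeq : ∀ t : ℝ, (∑ n ∈ Finset.Icc 1 N, a n * (n : ℂ) ^ (-(t : ℂ) * Complex.I)) = f t := by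
    intro t
    rw [hfdef]
    apply Finset.sum_congr rfl
    intro n hn
    have hn1 : 1 ≤ n := (Finset.mem_Icc.mp hn).1
    have hn0 : (n:ℂ) ≠ 0 := Nat.cast_ne_zero.mpr (by omega)
    rw [Complex.cpow_def_of_ne_zero hn0]
    congr 1
    rw [← Complex.natCast_log]
    push_cast
    ring
  -- continuity
  have hEcont : ∀ ξ : ℝ, Continuous fun t : ℝ => Complex.exp (Complex.I * (ξ : ℂ) * (t : ℂ)) := by
    intro ξ
    exact Complex.continuous_exp.comp (continuous_const.mul Complex.continuous_ofReal)
  have hfcont : Continuous f := by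
    rw [hfdef]
    exact continuous_finset_sum _ (fun n _ => continuous_const.mul (hEcont _))
  have hwcont : Continuous fun t : ℝ => 1 - |t - c| / L := by continuity
  have hnorm2 : Continuous fun t : ℝ => ‖f t‖ ^ 2 := (hfcont.norm.pow 2)
  have htermcont : ∀ ξ : ℝ, Continuous fun t : ℝ =>
      ((1 - |t - c| / L : ℝ) : ℂ) * Complex.exp (Complex.I * (ξ : ℂ) * (t : ℂ)) := by
    intro ξ
    exact (Complex.continuous_ofReal.comp hwcont).mul (hEcont ξ)
  -- weight bounds
  have hw01 : ∀ t ∈ Set.Icc (c - L) (c + L), 0 ≤ 1 - |t - c| / L ∧ 1 - |t - c| / L ≤ 1 := by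
    intro t ht
    have h1 : |t - c| ≤ L := abs_le.mpr ⟨by linarith [ht.1], by linarith [ht.2]⟩
    have h2 : 0 ≤ |t - c| := abs_nonneg _
    constructor
    · have : |t - c| / L ≤ 1 := (div_le_one hL0).mpr h1
      linarith
    · have : 0 ≤ |t - c| / L := div_nonneg h2 hL0.le
      linarith
  have hw34 : ∀ t ∈ Set.Icc T (2 * T), (3:ℝ)/4 ≤ 1 - |t - c| / L := by
    intro t ht
    have h1 : |t - c| ≤ T / 2 := by
      rw [hcdef]
      apply abs_le.mpr
      constructor <;> [linarith [ht.1]; linarith [ht.2]]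
    have h2 : |t - c| / L ≤ 1 / 4 := by
      rw [div_le_iff₀ hL0, hLdef]
      nlinarith
    linarith
  -- Step 1 : insert the weight
  have step1 : (∫ t in T..(2 * T), ‖f t‖ ^ 2)
      ≤ (4/3) * ∫ t in (c - L)..(c + L), (1 - |t - c| / L) * ‖f t‖ ^ 2 := by
    have int1 : IntervalIntegrable (fun t => ‖f t‖ ^ 2) volume T (2 * T) :=
      hnorm2.intervalIntegrable _ _
    have intw : ∀ u v : ℝ, IntervalIntegrable
        (fun t => (1 - |t - c| / L) * ‖f t‖ ^ 2) volume u v :=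
      fun u v => (hwcont.mul hnorm2).intervalIntegrable _ _
    have hmono : (∫ t in T..(2 * T), ‖f t‖ ^ 2)
        ≤ ∫ t in T..(2 * T), (4/3) * ((1 - |t - c| / L) * ‖f t‖ ^ 2) := by
      apply intervalIntegral.integral_mono_on hTT int1
        ((continuous_const.mul (hwcont.mul hnorm2)).intervalIntegrable _ _)
      intro x hx
      have h34 := hw34 x hx
      simp only [Pi.mul_apply]
      nlinarith [sq_nonneg ‖f x‖]
    rw [intervalIntegral.integral_const_mul] at hmono
    have hext : (∫ t in T..(2 * T), (1 - |t - c| / L) * ‖f t‖ ^ 2)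
        ≤ ∫ t in (c - L)..(c + L), (1 - |t - c| / L) * ‖f t‖ ^ 2 := by
      have e1 : (∫ t in (c - L)..T, (1 - |t - c| / L) * ‖f t‖ ^ 2)
          + (∫ t in T..(2 * T), (1 - |t - c| / L) * ‖f t‖ ^ 2)
          = ∫ t in (c - L)..(2 * T), (1 - |t - c| / L) * ‖f t‖ ^ 2 :=
        intervalIntegral.integral_add_adjacent_intervals (intw _ _) (intw _ _)
      have e2 : (∫ t in (c - L)..(2 * T), (1 - |t - c| / L) * ‖f t‖ ^ 2)
          + (∫ t in (2 * T)..(c + L), (1 - |t - c| / L) * ‖f t‖ ^ 2)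
          = ∫ t in (c - L)..(c + L), (1 - |t - c| / L) * ‖f t‖ ^ 2 :=
        intervalIntegral.integral_add_adjacent_intervals (intw _ _) (intw _ _)
      have pos1 : 0 ≤ ∫ t in (c - L)..T, (1 - |t - c| / L) * ‖f t‖ ^ 2 := by
        apply intervalIntegral.integral_nonneg hcl
        intro u hu
        have := hw01 u ⟨hu.1, by linarith [hu.2]⟩
        exact mul_nonneg this.1 (sq_nonneg _)
      have pos2 : 0 ≤ ∫ t in (2 * T)..(c + L), (1 - |t - c| / L) * ‖f t‖ ^ 2 := by
        apply intervalIntegral.integral_nonneg hcr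
        intro u hu
        have := hw01 u ⟨by linarith [hu.1], hu.2⟩
        exact mul_nonneg this.1 (sq_nonneg _)
      linarith
    linarith
  -- Step 2 : expand the square
  set J : ℕ → ℕ → ℂ := fun m n => ∫ t in (c - L)..(c + L),
    ((1 - |t - c| / L : ℝ) : ℂ)
      * Complex.exp (Complex.I * ((Real.log n - Real.log m : ℝ) : ℂ) * (t : ℂ)) with hJdef
  set g : ℝ → ℂ := fun t => ((1 - |t - c| / L : ℝ) : ℂ) * (f t * (starRingEnd ℂ) (f t))
    with hgdef
  have hgcont : Continuous g := by
    rw [hgdef]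
    exact (Complex.continuous_ofReal.comp hwcont).mul (hfcont.mul hfcont.star)
  have h2a : ∀ t : ℝ, (1 - |t - c| / L) * ‖f t‖ ^ 2 = (g t).re := by
    intro t
    rw [hgdef]
    dsimp only
    rw [Complex.mul_conj, ← Complex.ofReal_mul, Complex.ofReal_re, Complex.normSq_eq_norm_sq]
  have h2b : (∫ t in (c - L)..(c + L), (1 - |t - c| / L) * ‖f t‖ ^ 2)
      = (∫ t in (c - L)..(c + L), g t).re := by
    simp only [h2a]
    rw [intervalIntegral.integral_of_le habL, intervalIntegral.integral_of_le habL]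
    have h := _root_.integral_re
      (μ := MeasureTheory.volume.restrict (Set.Ioc (c - L) (c + L))) (f := g)
      (hgcont.integrableOn_Ioc)
    simpa using h
  have hpair : ∀ (x y t : ℝ),
      Complex.exp (Complex.I * ((-x : ℝ) : ℂ) * (t : ℂ))
        * (starRingEnd ℂ) (Complex.exp (Complex.I * ((-y : ℝ) : ℂ) * (t : ℂ)))
      = Complex.exp (Complex.I * ((y - x : ℝ) : ℂ) * (t : ℂ)) := by
    intro x y t
    rw [← Complex.exp_conj, ← Complex.exp_add]
    congr 1
    simp only [map_mul, Complex.conj_I, Complex.conj_ofReal]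
    push_cast
    ring
  have h2c : ∀ t : ℝ, g t = ∑ m ∈ Finset.Icc 1 N, ∑ n ∈ Finset.Icc 1 N,
      (a m * (starRingEnd ℂ) (a n)) *
        (((1 - |t - c| / L : ℝ) : ℂ)
          * Complex.exp (Complex.I * ((Real.log n - Real.log m : ℝ) : ℂ) * (t : ℂ))) := by
    intro t
    rw [hgdef, hfdef]
    dsimp only
    rw [map_sum, Finset.sum_mul_sum, Finset.mul_sum]
    apply Finset.sum_congr rfl
    intro m hm
    rw [Finset.mul_sum]
    apply Finset.sum_congr rfl
    intro n hn
    rw [map_mul]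
    rw [show (a m * Complex.exp (Complex.I * ((-Real.log m : ℝ) : ℂ) * (t : ℂ)))
        * ((starRingEnd ℂ) (a n)
            * (starRingEnd ℂ) (Complex.exp (Complex.I * ((-Real.log n : ℝ) : ℂ) * (t : ℂ))))
        = (a m * (starRingEnd ℂ) (a n))
            * (Complex.exp (Complex.I * ((-Real.log m : ℝ) : ℂ) * (t : ℂ))
              * (starRingEnd ℂ) (Complex.exp (Complex.I * ((-Real.log n : ℝ) : ℂ) * (t : ℂ))))
      from by ring]
    rw [hpair (Real.log m) (Real.log n) t]
    ring
  have h2d : (∫ t in (c - L)..(c + L), g t)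
      = ∑ m ∈ Finset.Icc 1 N, ∑ n ∈ Finset.Icc 1 N,
          (a m * (starRingEnd ℂ) (a n)) * J m n := by
    rw [intervalIntegral.integral_congr (fun t _ => h2c t)]
    rw [intervalIntegral.integral_finset_sum]
    · apply Finset.sum_congr rfl
      intro m hm
      rw [intervalIntegral.integral_finset_sum]
      · apply Finset.sum_congr rfl
        intro n hn
        rw [intervalIntegral.integral_const_mul]
      · intro n hn
        exact (continuous_const.mul (htermcont _)).intervalIntegrable _ _
    · intro m hm
      exact (continuous_finset_sum _
        (fun n _ => continuous_const.mul (htermcont _))).intervalIntegrable _ _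
  -- Step 3 : bound the real part by the sum of norms
  have hre_le : (∑ m ∈ Finset.Icc 1 N, ∑ n ∈ Finset.Icc 1 N,
        (a m * (starRingEnd ℂ) (a n)) * J m n).re
      ≤ ∑ m ∈ Finset.Icc 1 N, ∑ n ∈ Finset.Icc 1 N, ‖J m n‖ := by
    calc (∑ m ∈ Finset.Icc 1 N, ∑ n ∈ Finset.Icc 1 N,
          (a m * (starRingEnd ℂ) (a n)) * J m n).re
        ≤ ‖∑ m ∈ Finset.Icc 1 N, ∑ n ∈ Finset.Icc 1 N,
            (a m * (starRingEnd ℂ) (a n)) * J m n‖ := by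
          exact Complex.re_le_norm _
      _ ≤ ∑ m ∈ Finset.Icc 1 N, ‖∑ n ∈ Finset.Icc 1 N,
            (a m * (starRingEnd ℂ) (a n)) * J m n‖ := norm_sum_le _ _
      _ ≤ ∑ m ∈ Finset.Icc 1 N, ∑ n ∈ Finset.Icc 1 N,
            ‖(a m * (starRingEnd ℂ) (a n)) * J m n‖ :=
          Finset.sum_le_sum fun m _ => norm_sum_le _ _
      _ ≤ ∑ m ∈ Finset.Icc 1 N, ∑ n ∈ Finset.Icc 1 N, ‖J m n‖ := by
          apply Finset.sum_le_sum
          intro m _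
          apply Finset.sum_le_sum
          intro n _
          rw [norm_mul, norm_mul, RCLike.norm_conj]
          have h1 : ‖a m‖ * ‖a n‖ ≤ 1 :=
            mul_le_one₀ (ha m) (norm_nonneg _) (ha n)
          nlinarith [norm_nonneg (J m n), norm_nonneg (a m), norm_nonneg (a n)]
  -- Step 4 : bound the individual integrals
  have bound1 : ∀ m n : ℕ, ‖J m n‖ ≤ 2 * L := by
    intro m n
    rw [hJdef]
    dsimp only
    have h := intervalIntegral.norm_integral_le_of_norm_le_const (C := 1)
      (f := fun t => ((1 - |t - c| / L : ℝ) : ℂ)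
        * Complex.exp (Complex.I * ((Real.log n - Real.log m : ℝ) : ℂ) * (t : ℂ)))
      (a := c - L) (b := c + L) ?_
    · calc ‖∫ t in (c - L)..(c + L), ((1 - |t - c| / L : ℝ) : ℂ)
            * Complex.exp (Complex.I * ((Real.log n - Real.log m : ℝ) : ℂ) * (t : ℂ))‖
          ≤ 1 * |(c + L) - (c - L)| := h
        _ = 2 * L := by rw [one_mul, show (c + L) - (c - L) = 2 * L by ring,
              abs_of_pos (by linarith)]
    · intro x hx
      rw [Set.uIoc_of_le habL] at hx
      have hw := hw01 x ⟨hx.1.le, hx.2⟩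
      rw [norm_mul, Complex.norm_real]
      rw [mvt_norm_exp, mul_one, Real.norm_eq_abs, _root_.abs_of_nonneg hw.1]
      exact hw.2
  have bound2 : ∀ m ∈ Finset.Icc 1 N, ∀ n ∈ Finset.Icc 1 N, m ≠ n →
      ‖J m n‖ ≤ 4 * (N:ℝ) ^ 2 / (L * ((m:ℝ) - (n:ℝ)) ^ 2) := by
    intro m hm n hn hmn
    have hgap := mvt_log_gap N m n hm hn hmn
    have hd0 : ((m:ℝ) - (n:ℝ)) ^ 2 > 0 := by
      have : (m:ℝ) ≠ (n:ℝ) := by exact_mod_cast fun h => hmn (by exact_mod_cast h)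
      have : (m:ℝ) - (n:ℝ) ≠ 0 := sub_ne_zero.mpr this
      positivity
    have hN0 : (0:ℝ) < (N:ℝ) := by linarith
    have hξ : (Real.log n - Real.log m) ≠ 0 := by
      intro h0
      rw [h0] at hgap
      have h1 : ((m:ℝ) - (n:ℝ)) ^ 2 / (N:ℝ) ^ 2 ≤ 0 := by simpa using hgap
      have h2 : 0 < ((m:ℝ) - (n:ℝ)) ^ 2 / (N:ℝ) ^ 2 := by positivity
      linarith
    have hξ2 : 0 < (Real.log n - Real.log m) ^ 2 := by
      rcases hξ.lt_or_gt with h | h <;> nlinarith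
    have hb := mvt_triangle_fourier_bound c L (Real.log n - Real.log m) hL0 hξ
    rw [hJdef]
    dsimp only
    refine hb.trans ?_
    have hd2 : ((m:ℝ) - (n:ℝ)) ^ 2 ≤ (N:ℝ) ^ 2 * (Real.log n - Real.log m) ^ 2 := by
      rw [div_le_iff₀ (by positivity)] at hgap
      linarith
    rw [div_le_div_iff₀ (mul_pos hL0 hξ2) (mul_pos hL0 hd0)]
    nlinarith [mul_le_mul_of_nonneg_left hd2 hL0.le]
  -- Step 5 : sum the bounds
  have step5 : ∑ m ∈ Finset.Icc 1 N, ∑ n ∈ Finset.Icc 1 N, ‖J m n‖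
      ≤ 4 * T * N + 12 * (N:ℝ) ^ 2 := by
    have row : ∀ m ∈ Finset.Icc 1 N,
        ∑ n ∈ Finset.Icc 1 N, ‖J m n‖ ≤ 2 * L + 16 * (N:ℝ) ^ 2 / L := by
      intro m hm
      rw [← Finset.add_sum_erase _ _ hm]
      have hrow1 : ∑ n ∈ (Finset.Icc 1 N).erase m, ‖J m n‖
          ≤ ∑ n ∈ (Finset.Icc 1 N).erase m,
              (4 * (N:ℝ) ^ 2 / L) * (((m:ℝ) - (n:ℝ))⁻¹) ^ 2 := by
        apply Finset.sum_le_sum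
        intro n hn
        have hn' : n ∈ Finset.Icc 1 N := Finset.mem_of_mem_erase hn
        have hne : m ≠ n := fun h => (Finset.ne_of_mem_erase hn) h.symm
        refine (bound2 m hm n hn' hne).trans_eq ?_
        rw [inv_pow, ← div_eq_mul_inv, div_div]
      have hrow2 : ∑ n ∈ (Finset.Icc 1 N).erase m,
          (4 * (N:ℝ) ^ 2 / L) * (((m:ℝ) - (n:ℝ))⁻¹) ^ 2 ≤ (4 * (N:ℝ) ^ 2 / L) * 4 := by
        rw [← Finset.mul_sum]
        exact mul_le_mul_of_nonneg_left (mvt_row_sum_le N m hm)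
          (div_nonneg (by positivity) hL0.le)
      have := bound1 m m
      have hfin : (4 * (N:ℝ) ^ 2 / L) * 4 = 16 * (N:ℝ) ^ 2 / L := by ring
      linarith
    calc ∑ m ∈ Finset.Icc 1 N, ∑ n ∈ Finset.Icc 1 N, ‖J m n‖
        ≤ ∑ _m ∈ Finset.Icc 1 N, (2 * L + 16 * (N:ℝ) ^ 2 / L) := Finset.sum_le_sum row
      _ = N * (2 * L + 16 * (N:ℝ) ^ 2 / L) := by
          rw [Finset.sum_const, Nat.card_Icc, nsmul_eq_mul]
          norm_num
      _ ≤ 4 * T * N + 12 * (N:ℝ) ^ 2 := by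
          have hML : 2 * L = 4 * M := by rw [hLdef]; ring
          have hMTN : M ≤ T + N := by
            rw [hMdef]
            exact max_le (by linarith) (by linarith)
          have hinv : 16 * (N:ℝ) ^ 2 / L ≤ 8 * N := by
            rw [hLdef, div_le_iff₀ (by linarith)]
            nlinarith
          nlinarith [hNR]
  -- Step 6 : combine
  have hgoal_eq : (∫ t in T..(2 * T),
      ‖∑ n ∈ Finset.Icc 1 N, a n * (n : ℂ) ^ (-(t : ℂ) * Complex.I)‖ ^ 2)
      = ∫ t in T..(2 * T), ‖f t‖ ^ 2 := by
    apply intervalIntegral.integral_congr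
    intro t _
    dsimp only
    rw [hfeq t]
  rw [hgoal_eq]
  have key : (∫ t in T..(2 * T), ‖f t‖ ^ 2) ≤ (4/3) * (4 * T * N + 12 * (N:ℝ) ^ 2) := by
    refine step1.trans ?_
    rw [h2b, h2d]
    have := hre_le.trans step5
    linarith
  have hTN : 0 ≤ T * N := by positivity
  have hN2 : (0:ℝ) ≤ (N:ℝ) ^ 2 := by positivity
  nlinarith
end
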